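/- There exists a constant K > 0 such that the following holds for every integer n ≥ 3. Set d(i) = min(√(n/i), log n) and p_i = i·d(i)/(100n) for 1 ≤ i ≤ n, and let L₁,…,L_n be mutually independent random variables where L_i is geometrically distributed on {1,2,3,…} with success probability p_i. Then Pr[ Σ_{i=1}^n L_i ≥ 2·Σ_{i=1}^n 1/p_i ] ≤ K / (log n)². -/

import Mathlib

open MeasureTheory ProbabilityTheory
open scoped ENNReal
set_option maxHeartbeats 1000000

/-- `d(i) = min(√(n/i), log n)`. -/
noncomputable def dFun (n i : ℕ) : ℝ :=
  min (Real.sqrt ((n : ℝ) / (i : ℝ))) (Real.log n)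

/-- `p_i = i·d(i)/(100 n)` for `1 ≤ i ≤ n`, indexed here by `i : Fin n`
(so `i` stands for the index `i+1 ∈ {1,…,n}`). -/
noncomputable def pFun (n : ℕ) (i : Fin n) : ℝ :=
  ((i : ℕ) + 1 : ℝ) * dFun n ((i : ℕ) + 1) / (100 * (n : ℝ))


lemma geom_lintegral {Ω : Type} [MeasurableSpace Ω] (μ : Measure Ω)
    (X : Ω → ℕ) (hX : Measurable X) {p : ℝ}
    (hpmf : ∀ k : ℕ, 1 ≤ k → μ {ω | X ω = k} = ENNReal.ofReal ((1 - p) ^ (k - 1) * p))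
    (g : ℕ → ℝ≥0∞) (hg0 : g 0 = 0) :
    ∫⁻ ω, g (X ω) ∂μ = ∑' j : ℕ, g (j+1) * ENNReal.ofReal ((1-p)^j * p) := by
  have h1 : ∫⁻ ω, g (X ω) ∂μ = ∫⁻ k, g k ∂(μ.map X) :=
    (lintegral_map (measurable_from_nat (f := g)) hX).symm
  rw [h1, lintegral_countable' g]
  rw [tsum_eq_zero_add' (f := fun k => g k * (μ.map X) {k}) ENNReal.summable]
  have h0 : g 0 * (μ.map X) {0} = 0 := by rw [hg0, zero_mul]
  rw [h0, zero_add]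
  congr 1
  funext j
  rw [Measure.map_apply hX (MeasurableSet.singleton (j+1))]
  have : X ⁻¹' {j+1} = {ω | X ω = j+1} := rfl
  rw [this, hpmf (j+1) (by omega)]
  simp

lemma geom_moments {Ω : Type} [MeasurableSpace Ω] (μ : Measure Ω) [IsProbabilityMeasure μ]
    (X : Ω → ℕ) (hX : Measurable X) {p : ℝ} (hp0 : 0 < p) (hp1 : p ≤ 1)
    (hpmf : ∀ k : ℕ, 1 ≤ k → μ {ω | X ω = k} = ENNReal.ofReal ((1 - p) ^ (k - 1) * p)) :
    MemLp (fun ω => (X ω : ℝ)) 2 μ ∧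
    (∫ ω, (X ω : ℝ) ∂μ) = 1 / p ∧
    variance (fun ω => (X ω : ℝ)) μ ≤ 1 / p ^ 2 := by
  set q : ℝ := 1 - p with hq
  have hq0 : 0 ≤ q := by simp [hq]; linarith
  have hq1 : q < 1 := by simp [hq]; linarith
  have hqn : ‖q‖ < 1 := by rw [Real.norm_eq_abs, abs_of_nonneg hq0]; exact hq1
  have hpq : 1 - q = p := by simp [hq]
  -- first moment sum
  have hS1 : HasSum (fun j : ℕ => ((j : ℝ) + 1) * q ^ j) (1 / p ^ 2) := by
    have h := hasSum_choose_mul_geometric_of_norm_lt_one 1 hqn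
    rw [hpq] at h
    convert h using 2 with j
    · rfl
    simp [Nat.choose_one_right]
  -- second moment sum
  have hS2 : HasSum (fun j : ℕ => ((j : ℝ) + 1) ^ 2 * q ^ j) (2 / p ^ 3 - 1 / p ^ 2) := by
    have h2 := hasSum_choose_mul_geometric_of_norm_lt_one 2 hqn
    have h1 := hasSum_choose_mul_geometric_of_norm_lt_one 1 hqn
    rw [hpq] at h2 h1
    have := (h2.mul_left 2).sub h1
    convert this using 2 with j
    · rfl
    · have c2 : ((j + 2).choose 2 : ℝ) = (j + 2) * (j + 1) / 2 := by
        rw [Nat.cast_choose_two]; push_cast; ring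
      have c1 : ((j + 1).choose 1 : ℝ) = (j + 1) := by simp [Nat.choose_one_right]
      rw [c2, c1] -- goal: (j+1)^2 * q^j = 2 * ((j+2)*(j+1)/2 * q^j) - (j+1)*q^j
      ring
    · ring
  -- lintegral of X
  have hM1 : ∫⁻ ω, (X ω : ℝ≥0∞) ∂μ = ENNReal.ofReal (1 / p) := by
    have := geom_lintegral μ X hX hpmf (fun k => (k : ℝ≥0∞)) (by simp)
    rw [this]
    have heq : ∀ j : ℕ, ((j + 1 : ℕ) : ℝ≥0∞) * ENNReal.ofReal (q ^ j * p)
        = ENNReal.ofReal (((j : ℝ) + 1) * q ^ j * p) := by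
      intro j
      rw [← ENNReal.ofReal_natCast (j+1), ← ENNReal.ofReal_mul (by positivity)]
      push_cast
      ring_nf
    rw [← hq]
    simp only [heq]
    rw [← ENNReal.ofReal_tsum_of_nonneg (fun j => by positivity)
      ((hS1.mul_right p).summable)]
    congr 1
    rw [(hS1.mul_right p).tsum_eq]
    field_simp
  -- lintegral of X^2
  have hM2 : ∫⁻ ω, ((X ω : ℝ≥0∞)) ^ 2 ∂μ = ENNReal.ofReal (2 / p ^ 2 - 1 / p) := by
    have := geom_lintegral μ X hX hpmf (fun k => ((k : ℝ≥0∞)) ^ 2) (by simp)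
    rw [this]
    have heq : ∀ j : ℕ, ((j + 1 : ℕ) : ℝ≥0∞) ^ 2 * ENNReal.ofReal (q ^ j * p)
        = ENNReal.ofReal (((j : ℝ) + 1) ^ 2 * q ^ j * p) := by
      intro j
      rw [← ENNReal.ofReal_natCast (j+1), ← ENNReal.ofReal_pow (by positivity),
        ← ENNReal.ofReal_mul (by positivity)]
      push_cast
      ring_nf
    rw [← hq]
    simp only [heq]
    rw [← ENNReal.ofReal_tsum_of_nonneg (fun j => by positivity)
      ((hS2.mul_right p).summable)]
    congr 1
    rw [(hS2.mul_right p).tsum_eq]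
    field_simp
  -- moments
  have hmeas : Measurable (fun ω => (X ω : ℝ)) :=
    (measurable_from_nat (f := (Nat.cast : ℕ → ℝ))).comp hX
  have hae : AEStronglyMeasurable (fun ω => (X ω : ℝ)) μ := hmeas.aestronglyMeasurable
  have hofReal : ∀ ω : Ω, ENNReal.ofReal ((X ω : ℝ)) = ((X ω : ℕ) : ℝ≥0∞) :=
    fun ω => ENNReal.ofReal_natCast _
  have hofReal2 : ∀ ω : Ω, ENNReal.ofReal ((X ω : ℝ) ^ 2) = ((X ω : ℕ) : ℝ≥0∞) ^ 2 := fun ω => by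
    rw [ENNReal.ofReal_pow (by positivity), ENNReal.ofReal_natCast]
  have hE : ∫ ω, (X ω : ℝ) ∂μ = 1 / p := by
    rw [integral_eq_lintegral_of_nonneg_ae (ae_of_all _ fun ω => by positivity) hae]
    simp only [hofReal]
    rw [hM1, ENNReal.toReal_ofReal (by positivity)]
  have h21 : 1 / p ≤ 2 / p ^ 2 := by
    rw [div_le_div_iff₀ hp0 (by positivity)]
    nlinarith
  have hInt2 : Integrable (fun ω => (X ω : ℝ) ^ 2) μ := by
    refine ⟨(hmeas.pow_const 2).aestronglyMeasurable, ?_⟩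
    rw [hasFiniteIntegral_iff_ofReal (ae_of_all _ fun ω => by positivity)]
    simp only [hofReal2]
    rw [hM2]
    exact ENNReal.ofReal_lt_top
  have hMem : MemLp (fun ω => (X ω : ℝ)) 2 μ := (memLp_two_iff_integrable_sq hae).2 hInt2
  refine ⟨hMem, hE, ?_⟩
  have hE2 : ∫ ω, (X ω : ℝ) ^ 2 ∂μ = 2 / p ^ 2 - 1 / p := by
    rw [integral_eq_lintegral_of_nonneg_ae (ae_of_all _ fun ω => by positivity)
      (hmeas.pow_const 2).aestronglyMeasurable]
    simp only [hofReal2]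
    rw [hM2, ENNReal.toReal_ofReal (by linarith)]
  have hvar : variance (fun ω => (X ω : ℝ)) μ = (2 / p ^ 2 - 1 / p) - (1 / p) ^ 2 := by
    rw [variance_eq_sub hMem, hE]
    congr 1
  rw [hvar]
  have : 0 < 1 / p := by positivity
  have hps : (1 / p) ^ 2 = 1 / p ^ 2 := by field_simp
  have h22 : 2 / p ^ 2 = 2 * (1 / p ^ 2) := by ring
  linarith

lemma sum_inv_sq_le (n : ℕ) : ∑ i ∈ Finset.range n, (1:ℝ)/((i:ℝ)+1)^2 ≤ 2 := by
  have key : ∀ m : ℕ, ∑ i ∈ Finset.range (m+1), (1:ℝ)/((i:ℝ)+1)^2 ≤ 2 - 1/((m:ℝ)+1) := by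
    intro m
    induction m with
    | zero => norm_num
    | succ k ih =>
      rw [Finset.sum_range_succ]
      have h1 : (0:ℝ) < (k:ℝ)+1 := by positivity
      have h2 : (0:ℝ) < (k:ℝ)+2 := by positivity
      have hterm : (1:ℝ)/((k:ℝ)+1+1)^2 ≤ 1/((k:ℝ)+1) - 1/((k:ℝ)+2) := by
        rw [div_sub_div _ _ (ne_of_gt h1) (ne_of_gt h2), div_le_div_iff₀ (by positivity) (by positivity)]
        ring_nf
        nlinarith
      push_cast
      push_cast at ih hterm
      rw [show ((k:ℝ)+1+1) = (k:ℝ)+2 by ring]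
      rw [show ((k:ℝ)+1+1) = (k:ℝ)+2 by ring] at hterm
      linarith
  cases n with
  | zero => simp
  | succ m =>
    refine (key m).trans ?_
    have : (0:ℝ) < (m:ℝ)+1 := by positivity
    have : 0 < 1/((m:ℝ)+1) := by positivity
    linarith

lemma harmonic_real (n : ℕ) : ((harmonic n : ℚ) : ℝ) = ∑ i ∈ Finset.range n, (1:ℝ)/((i:ℝ)+1) := by
  unfold harmonic
  push_cast
  refine Finset.sum_congr rfl fun i _ => ?_
  rw [one_div]

lemma log_le_harm (n : ℕ) : Real.log n ≤ ∑ i ∈ Finset.range n, (1:ℝ)/((i:ℝ)+1) := by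
  rw [← harmonic_real]
  refine le_trans ?_ (log_add_one_le_harmonic n)
  have : (n:ℝ) ≤ (n:ℝ)+1 := by linarith
  calc Real.log n ≤ Real.log ((n:ℝ)+1) := by
        rcases Nat.eq_zero_or_pos n with h|h
        · simp [h]
        · exact Real.log_le_log (by positivity) this
    _ = Real.log ((n+1 : ℕ) : ℝ) := by push_cast; rfl
  
lemma harm_le (n : ℕ) : ∑ i ∈ Finset.range n, (1:ℝ)/((i:ℝ)+1) ≤ 1 + Real.log n := by
  rw [← harmonic_real]
  exact harmonic_le_one_add_log n

lemma log_cube_le (n : ℕ) (hn : 1 ≤ n) : (Real.log n)^3 ≤ 27 * n := by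
  have hn' : (0:ℝ) < n := by exact_mod_cast hn
  have h1 : Real.log ((n:ℝ) ^ ((1:ℝ)/3)) = (1/3) * Real.log n := Real.log_rpow hn' _
  have h2 : Real.log ((n:ℝ) ^ ((1:ℝ)/3)) ≤ (n:ℝ) ^ ((1:ℝ)/3) := by
    have hp : (0:ℝ) < (n:ℝ) ^ ((1:ℝ)/3) := Real.rpow_pos_of_pos hn' _
    linarith [Real.log_le_sub_one_of_pos hp]
  have h3 : (1/3) * Real.log n ≤ (n:ℝ) ^ ((1:ℝ)/3) := by rw [← h1]; exact h2
  have hlogpos : 0 ≤ Real.log n := Real.log_natCast_nonneg n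
  have h4 : ((1/3) * Real.log n)^3 ≤ ((n:ℝ) ^ ((1:ℝ)/3))^3 := by
    apply pow_le_pow_left₀ (by positivity) h3
  have h5 : ((n:ℝ) ^ ((1:ℝ)/3))^3 = n := by
    rw [← Real.rpow_natCast ((n:ℝ) ^ ((1:ℝ)/3)) 3, ← Real.rpow_mul (le_of_lt hn')]
    norm_num
  rw [h5] at h4
  nlinarith [h4]

lemma one_le_log {n : ℕ} (hn : 3 ≤ n) : 1 ≤ Real.log n := by
  have h0 : (0:ℝ) < n := by exact_mod_cast lt_of_lt_of_le (by norm_num) hn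
  rw [Real.le_log_iff_exp_le h0]
  calc Real.exp 1 ≤ 3 := by linarith [Real.exp_one_lt_d9]
    _ ≤ (n:ℝ) := by exact_mod_cast hn

lemma dFun_pos {n : ℕ} (hn : 3 ≤ n) {j : ℕ} (hj1 : 1 ≤ j) : 0 < dFun n j := by
  apply lt_min
  · apply Real.sqrt_pos.2
    have h3 : (0:ℝ) < n := by exact_mod_cast lt_of_lt_of_le (by norm_num) hn
    have : (0:ℝ) < j := by exact_mod_cast hj1
    positivity
  · linarith [one_le_log hn]

lemma pFun_pos {n : ℕ} (hn : 3 ≤ n) (i : Fin n) : 0 < pFun n i := by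
  have h3 : (0:ℝ) < n := by exact_mod_cast lt_of_lt_of_le (by norm_num) hn
  have := dFun_pos hn (j := (i:ℕ)+1) (by omega)
  unfold pFun
  positivity

lemma pFun_le_one {n : ℕ} (hn : 3 ≤ n) (i : Fin n) : pFun n i ≤ 1 := by
  have h3 : (0:ℝ) < n := by exact_mod_cast lt_of_lt_of_le (by norm_num) hn
  have hj : (0:ℝ) < ((i:ℕ):ℝ) + 1 := by positivity
  have hjn : ((i:ℕ):ℝ) + 1 ≤ n := by
    have := i.isLt
    exact_mod_cast Nat.succ_le_of_lt this
  have hd : dFun n ((i:ℕ)+1) ≤ Real.sqrt ((n:ℝ) / (((i:ℕ):ℝ)+1)) := by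
    unfold dFun
    push_cast
    exact min_le_left _ _
  have key : (((i:ℕ):ℝ)+1) * Real.sqrt ((n:ℝ) / (((i:ℕ):ℝ)+1)) ≤ n := by
    have h1 : (((i:ℕ):ℝ)+1) * Real.sqrt ((n:ℝ) / (((i:ℕ):ℝ)+1))
        = Real.sqrt ((((i:ℕ):ℝ)+1)^2 * ((n:ℝ) / (((i:ℕ):ℝ)+1))) := by
      rw [Real.sqrt_mul (by positivity), Real.sqrt_sq (by positivity)]
    have h2 : (((i:ℕ):ℝ)+1)^2 * ((n:ℝ) / (((i:ℕ):ℝ)+1)) = (((i:ℕ):ℝ)+1) * n := by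
      field_simp
    rw [h1, h2]
    calc Real.sqrt ((((i:ℕ):ℝ)+1) * n) ≤ Real.sqrt ((n:ℝ) * n) := by
          apply Real.sqrt_le_sqrt
          exact mul_le_mul_of_nonneg_right hjn (le_of_lt h3)
      _ = n := Real.sqrt_mul_self (le_of_lt h3)
  unfold pFun
  rw [div_le_one (by positivity)]
  calc (((i:ℕ):ℝ)+1) * dFun n ((i:ℕ)+1) ≤ (((i:ℕ):ℝ)+1) * Real.sqrt ((n:ℝ) / (((i:ℕ):ℝ)+1)) :=
        mul_le_mul_of_nonneg_left hd (le_of_lt hj)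
    _ ≤ n := key
    _ ≤ 100 * n := by linarith

lemma sum_one_div_pFun_ge {n : ℕ} (hn : 3 ≤ n) :
    100 * (n:ℝ) ≤ ∑ i : Fin n, 1 / pFun n i := by
  have h3 : (0:ℝ) < n := by exact_mod_cast lt_of_lt_of_le (by norm_num) hn
  have hc1 : 1 ≤ Real.log n := one_le_log hn
  have hc0 : 0 < Real.log n := by linarith
  have step : ∀ i : Fin n, (100 * (n:ℝ) / Real.log n) * (1/(((i:ℕ):ℝ)+1)) ≤ 1 / pFun n i := by
    intro i
    have hp := pFun_pos hn i
    have hj : (0:ℝ) < ((i:ℕ):ℝ)+1 := by positivity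
    have hub : pFun n i ≤ ((((i:ℕ):ℝ)+1) * Real.log n) / (100*(n:ℝ)) := by
      unfold pFun dFun
      push_cast
      gcongr
      exact min_le_right _ _
    have h2 := one_div_le_one_div_of_le hp hub
    calc (100*(n:ℝ)/Real.log n) * (1/(((i:ℕ):ℝ)+1))
        = 1 / (((((i:ℕ):ℝ)+1)*Real.log n)/(100*(n:ℝ))) := by
          field_simp
      _ ≤ 1 / pFun n i := h2
  calc 100*(n:ℝ) = (100*(n:ℝ)/Real.log n) * Real.log n := by field_simp
    _ ≤ (100*(n:ℝ)/Real.log n) * (∑ i ∈ Finset.range n, 1/((i:ℝ)+1)) :=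
        mul_le_mul_of_nonneg_left (log_le_harm n) (by positivity)
    _ = ∑ i ∈ Finset.range n, (100*(n:ℝ)/Real.log n) * (1/((i:ℝ)+1)) := Finset.mul_sum _ _ _
    _ = ∑ i : Fin n, (100*(n:ℝ)/Real.log n) * (1/(((i:ℕ):ℝ)+1)) :=
        (Fin.sum_univ_eq_sum_range (fun j => (100*(n:ℝ)/Real.log n) * (1/((j:ℝ)+1))) n).symm
    _ ≤ ∑ i : Fin n, 1 / pFun n i := Finset.sum_le_sum (fun i _ => step i)

lemma sum_one_div_pFun_sq_le {n : ℕ} (hn : 3 ≤ n) :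
    ∑ i : Fin n, 1 / (pFun n i)^2 ≤ 560000 * (n:ℝ)^2 / (Real.log n)^2 := by
  have h3 : (0:ℝ) < n := by exact_mod_cast lt_of_lt_of_le (by norm_num) hn
  set c := Real.log n with hcdef
  have hc1 : 1 ≤ c := one_le_log hn
  have hc0 : 0 < c := by linarith
  have step : ∀ i : Fin n, 1/(pFun n i)^2 ≤
      10000*(n:ℝ) * (1/(((i:ℕ):ℝ)+1)) + (10000*(n:ℝ)^2/c^2) * (1/(((i:ℕ):ℝ)+1)^2) := by
    intro i
    set j : ℝ := ((i:ℕ):ℝ)+1 with hjdef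
    have hj : (0:ℝ) < j := by positivity
    have hd := dFun_pos hn (n := n) (j := (i:ℕ)+1) (by omega)
    have hdeq : dFun n ((i:ℕ)+1) = min (Real.sqrt ((n:ℝ)/j)) c := by
      unfold dFun
      rw [hjdef]
      push_cast
      rfl
    have hdinv : 1/(dFun n ((i:ℕ)+1))^2 ≤ j/(n:ℝ) + 1/c^2 := by
      rw [hdeq]
      rcases min_cases (Real.sqrt ((n:ℝ)/j)) c with ⟨hmin, hle⟩ | ⟨hmin, hle⟩
      · rw [hmin, Real.sq_sqrt (by positivity), one_div_div]
        have : (0:ℝ) < 1/c^2 := by positivity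
        linarith
      · rw [hmin]
        have : (0:ℝ) ≤ j/(n:ℝ) := by positivity
        linarith
    have hp2 : (1:ℝ)/(pFun n i)^2 = 10000*(n:ℝ)^2/(j^2) * (1/(dFun n ((i:ℕ)+1))^2) := by
      unfold pFun
      rw [← hjdef]
      field_simp
      ring
    rw [hp2]
    calc 10000*(n:ℝ)^2/(j^2) * (1/(dFun n ((i:ℕ)+1))^2)
        ≤ 10000*(n:ℝ)^2/(j^2) * (j/(n:ℝ) + 1/c^2) :=
          mul_le_mul_of_nonneg_left hdinv (by positivity)
      _ = 10000*(n:ℝ) * (1/j) + (10000*(n:ℝ)^2/c^2) * (1/j^2) := by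
          field_simp
  have hsum : ∑ i : Fin n, 1/(pFun n i)^2 ≤ ∑ i : Fin n,
      (10000*(n:ℝ) * (1/(((i:ℕ):ℝ)+1)) + (10000*(n:ℝ)^2/c^2) * (1/(((i:ℕ):ℝ)+1)^2)) :=
    Finset.sum_le_sum (fun i _ => step i)
  refine le_trans hsum ?_
  rw [Finset.sum_add_distrib, ← Finset.mul_sum, ← Finset.mul_sum]
  have e1 : ∑ i : Fin n, (1:ℝ)/(((i:ℕ):ℝ)+1) = ∑ i ∈ Finset.range n, (1:ℝ)/((i:ℝ)+1) :=
    Fin.sum_univ_eq_sum_range (fun j => (1:ℝ)/((j:ℝ)+1)) n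
  have e2 : ∑ i : Fin n, (1:ℝ)/(((i:ℕ):ℝ)+1)^2 = ∑ i ∈ Finset.range n, (1:ℝ)/((i:ℝ)+1)^2 :=
    Fin.sum_univ_eq_sum_range (fun j => (1:ℝ)/((j:ℝ)+1)^2) n
  rw [e1, e2]
  have hH : ∑ i ∈ Finset.range n, (1:ℝ)/((i:ℝ)+1) ≤ 1 + c := harm_le n
  have hS2 : ∑ i ∈ Finset.range n, (1:ℝ)/((i:ℝ)+1)^2 ≤ 2 := sum_inv_sq_le n
  have hHpos : (0:ℝ) ≤ ∑ i ∈ Finset.range n, (1:ℝ)/((i:ℝ)+1) := by positivity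
  have hcube : c^3 ≤ 27 * (n:ℝ) := log_cube_le n (by omega)
  have hA : 10000*(n:ℝ) * (∑ i ∈ Finset.range n, (1:ℝ)/((i:ℝ)+1)) ≤ 10000*(n:ℝ)*(1+c) :=
    mul_le_mul_of_nonneg_left hH (by positivity)
  have hB : (10000*(n:ℝ)^2/c^2) * (∑ i ∈ Finset.range n, (1:ℝ)/((i:ℝ)+1)^2)
      ≤ (10000*(n:ℝ)^2/c^2) * 2 := mul_le_mul_of_nonneg_left hS2 (by positivity)
  have hC : 10000*(n:ℝ)*(1+c) ≤ 540000 * (n:ℝ)^2/c^2 := by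
    rw [le_div_iff₀ (by positivity)]
    have h1 : 10000*(n:ℝ)*(1+c) ≤ 20000*(n:ℝ)*c := by nlinarith
    nlinarith [mul_le_mul_of_nonneg_left hcube (by positivity : (0:ℝ) ≤ 20000*(n:ℝ))]
  have hD : (10000*(n:ℝ)^2/c^2) * 2 = 20000*(n:ℝ)^2/c^2 := by ring
  have : 540000 * (n:ℝ)^2/c^2 + 20000*(n:ℝ)^2/c^2 = 560000 * (n:ℝ)^2/c^2 := by ring
  linarith
/-- There is a constant `K > 0` such that for every `n ≥ 3` and mutually
independent geometric random variables `L₁,…,L_n` on `{1,2,…}` with success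
probabilities `p_i = i·d(i)/(100n)`, we have
`Pr[Σ L_i ≥ 2·Σ 1/p_i] ≤ K/(log n)²`. -/
theorem sum_geometric_tail_bound :
    ∃ K : ℝ, 0 < K ∧
      ∀ (n : ℕ), 3 ≤ n →
      ∀ {Ω : Type} [MeasurableSpace Ω] (μ : Measure Ω) [IsProbabilityMeasure μ]
        (L : Fin n → Ω → ℕ),
        (∀ i, Measurable (L i)) →
        iIndepFun L μ →
        (∀ (i : Fin n) (k : ℕ), 1 ≤ k →
          μ {ω | L i ω = k} = ENNReal.ofReal ((1 - pFun n i) ^ (k - 1) * pFun n i)) →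
        (μ {ω | 2 * ∑ i, 1 / pFun n i ≤ ∑ i, (L i ω : ℝ)}).toReal ≤
          K / (Real.log n) ^ 2 := by
  refine ⟨56, by norm_num, ?_⟩
  intro n hn Ω _ μ _ L hL hIndep hpmf
  have h3 : (0:ℝ) < n := by exact_mod_cast lt_of_lt_of_le (by norm_num) hn
  have hc1 : 1 ≤ Real.log n := one_le_log hn
  have hc0 : 0 < Real.log n := by linarith
  set m := ∑ i : Fin n, 1 / pFun n i with hm
  have hm100 : 100*(n:ℝ) ≤ m := sum_one_div_pFun_ge hn
  have hmpos : 0 < m := by linarith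
  have hg : ∀ i : Fin n, MemLp (fun ω => (L i ω : ℝ)) 2 μ ∧
      (∫ ω, (L i ω : ℝ) ∂μ) = 1 / pFun n i ∧
      variance (fun ω => (L i ω : ℝ)) μ ≤ 1 / (pFun n i) ^ 2 :=
    fun i => geom_moments μ (L i) (hL i) (pFun_pos hn i) (pFun_le_one hn i) (hpmf i)
  set S : Ω → ℝ := fun ω => ∑ i : Fin n, (L i ω : ℝ) with hSdef
  have hfun : S = ∑ i : Fin n, (fun ω => (L i ω : ℝ)) := by
    funext ω
    rw [hSdef, Finset.sum_apply]
  have hSmem : MemLp S 2 μ := by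
    rw [hfun]
    exact memLp_finset_sum' Finset.univ (fun i _ => (hg i).1)
  have hES : μ[S] = m := by
    rw [hSdef]
    rw [integral_finset_sum _ (fun i _ => ((hg i).1.integrable one_le_two))]
    exact Finset.sum_congr rfl (fun i _ => (hg i).2.1)
  have hpair : Set.Pairwise ↑(Finset.univ : Finset (Fin n))
      (fun i j => IndepFun (fun ω => (L i ω : ℝ)) (fun ω => (L j ω : ℝ)) μ) := by
    intro i _ j _ hij
    exact (hIndep.indepFun hij).comp measurable_from_nat measurable_from_nat
  have hvarS : variance S μ = ∑ i : Fin n, variance (fun ω => (L i ω : ℝ)) μ := by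
    rw [hfun, IndepFun.variance_sum (fun i _ => (hg i).1) hpair]
  have hvarle : variance S μ ≤ ∑ i : Fin n, 1/(pFun n i)^2 := by
    rw [hvarS]
    exact Finset.sum_le_sum (fun i _ => (hg i).2.2)
  have hcheb := meas_ge_le_variance_div_sq (μ := μ) hSmem hmpos
  have hsub : {ω | 2 * m ≤ ∑ i, (L i ω : ℝ)} ⊆ {ω | m ≤ |S ω - μ[S]|} := by
    intro ω h
    simp only [Set.mem_setOf_eq] at h ⊢
    rw [hES]
    have hSω : 2*m ≤ S ω := h
    rw [abs_of_nonneg (by linarith)]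
    linarith
  have h1 : μ {ω | 2 * m ≤ ∑ i, (L i ω : ℝ)} ≤ ENNReal.ofReal (variance S μ / m^2) :=
    le_trans (measure_mono hsub) hcheb
  have h2 : (μ {ω | 2 * m ≤ ∑ i, (L i ω : ℝ)}).toReal ≤ variance S μ / m^2 := by
    refine le_trans (ENNReal.toReal_mono ENNReal.ofReal_ne_top h1) ?_
    rw [ENNReal.toReal_ofReal (div_nonneg (variance_nonneg _ _) (sq_nonneg _))]
  refine le_trans h2 ?_
  have hV : variance S μ ≤ 560000*(n:ℝ)^2/(Real.log n)^2 :=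
    le_trans hvarle (sum_one_div_pFun_sq_le hn)
  have hm2 : 10000*(n:ℝ)^2 ≤ m^2 := by nlinarith
  calc variance S μ / m^2
      ≤ (560000*(n:ℝ)^2/(Real.log n)^2) / (10000*(n:ℝ)^2) :=
        div_le_div₀ (by positivity) hV (by positivity) hm2
    _ = 56 / (Real.log n)^2 := by
        field_simp
        ring
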